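/- Double robustness identity (propensity side): if the true outcome regressions μ1(X), μ0(X) are used, but arbitrary measurable functions ẽ(X) ∈ (0,1) and π̃(X) ∈ (0,1) (bounded away from 0 and 1) replace e1(X) and π(X), then E[ (G/(1−q))·((1−π̃(X))/π̃(X))·( A(Y−μ1(X))/ẽ(X) − (1−A)(Y−μ0(X))/(1−ẽ(X)) ) + ((1−G)/(1−q))·(μ1(X) − μ0(X)) ] = τ. -/

import Mathlib

open MeasureTheory ProbabilityTheory Filter

def mX {Ω : Type*} (X : Ω → ℝ) : MeasurableSpace Ω :=
  MeasurableSpace.comap X inferInstance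


lemma trunc_abs_le (n : ℕ) (x : ℝ) : |max (-(n:ℝ)) (min x n)| ≤ |x| := by
  rw [abs_le]
  constructor
  · exact le_trans (le_min (neg_abs_le x)
      ((neg_nonpos.mpr (abs_nonneg x)).trans (Nat.cast_nonneg n))) (le_max_right _ _)
  · exact max_le ((neg_nonpos.mpr (Nat.cast_nonneg n)).trans (abs_nonneg x))
      ((min_le_left _ _).trans (le_abs_self x))

lemma trunc_abs_le' (n : ℕ) (x : ℝ) : |max (-(n:ℝ)) (min x n)| ≤ n := by
  rw [abs_le]
  exact ⟨le_max_left _ _, max_le (neg_le_self (Nat.cast_nonneg n)) (min_le_right _ _)⟩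

lemma trunc_tendsto (x : ℝ) :
    Tendsto (fun n : ℕ => max (-(n:ℝ)) (min x n)) atTop (nhds x) := by
  obtain ⟨N, hN⟩ := exists_nat_ge |x|
  refine tendsto_const_nhds.congr' (eventually_atTop.mpr ⟨N, fun n hn => ?_⟩)
  have hn' : |x| ≤ (n:ℝ) := hN.trans (Nat.cast_le.mpr hn)
  show x = max (-(n:ℝ)) (min x n)
  rw [min_eq_left ((le_abs_self x).trans hn'),
    max_eq_right (by linarith [neg_abs_le x])]

lemma int_bdd_mul {Ω : Type*} {_mΩ : MeasurableSpace Ω} {P : Measure Ω}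
    {f g : Ω → ℝ} (hg : Integrable g P) (hfm : AEStronglyMeasurable f P) {C : ℝ}
    (hC : ∀ᵐ ω ∂P, |f ω| ≤ C) : Integrable (fun ω => f ω * g ω) P := by
  refine Integrable.mono' (hg.abs.const_mul C) (hfm.mul hg.1) ?_
  filter_upwards [hC] with ω h
  rw [Real.norm_eq_abs, abs_mul]
  exact mul_le_mul_of_nonneg_right h (abs_nonneg _)

lemma condexp_limit {Ω : Type*} [inst : MeasurableSpace Ω] (P : Measure Ω)
    [IsProbabilityMeasure P]
    (Y0 Y1 W₁ W₂ c : Ω → ℝ)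
    (hY0m : Measurable Y0) (hY1m : Measurable Y1)
    (hW₁m : Measurable W₁) (hW₂m : Measurable W₂) (hcm : AEStronglyMeasurable c P)
    (hW₁ : ∀ ω, |W₁ ω| ≤ 1) (hW₂ : ∀ ω, |W₂ ω| ≤ 1) (hc : ∀ᵐ ω ∂P, |c ω| ≤ 1)
    (ζ : ℝ × ℝ → ℝ) (hζ : Measurable ζ)
    (hZint : Integrable (fun ω => ζ (Y0 ω, Y1 ω)) P)
    (m : MeasurableSpace Ω) (hm : m ≤ inst)
    (hyp : ∀ f : ℝ × ℝ → ℝ, Measurable f → (∃ C, ∀ p, |f p| ≤ C) →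
      P[fun ω => W₁ ω * f (Y0 ω, Y1 ω)|m]
        =ᵐ[P] fun ω => c ω * (P[fun ω => W₂ ω * f (Y0 ω, Y1 ω)|m]) ω) :
    P[fun ω => W₁ ω * ζ (Y0 ω, Y1 ω)|m]
      =ᵐ[P] fun ω => c ω * (P[fun ω => W₂ ω * ζ (Y0 ω, Y1 ω)|m]) ω := by
  letI instΩ : MeasurableSpace Ω := inst
  haveI : SigmaFinite (P.trim hm) := inferInstance
  set Z : Ω → ℝ := fun ω => ζ (Y0 ω, Y1 ω) with hZ
  have hZm : Measurable[inst] Z := hζ.comp (hY0m.prodMk hY1m)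
  set f : ℕ → ℝ × ℝ → ℝ := fun n p => max (-(n:ℝ)) (min (ζ p) n) with hf
  have hfm : ∀ n, Measurable (f n) := fun n =>
    measurable_const.max ((hζ.min measurable_const))
  have hfb : ∀ n, ∃ C, ∀ p, |f n p| ≤ C := fun n => ⟨n, fun p => trunc_abs_le' n (ζ p)⟩
  set F : ℕ → Ω → ℝ := fun n ω => f n (Y0 ω, Y1 ω) with hF
  have hFm : ∀ n, Measurable[inst] (F n) := fun n => (hfm n).comp (hY0m.prodMk hY1m)
  have hFle : ∀ n ω, |F n ω| ≤ |Z ω| := fun n ω => trunc_abs_le n (ζ (Y0 ω, Y1 ω))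
  have hFint : ∀ n, Integrable (F n) P := fun n =>
    Integrable.mono' (μ := P) hZint.abs ((hFm n).aestronglyMeasurable (μ := P))
      (ae_of_all _ fun ω => by rw [Real.norm_eq_abs]; exact hFle n ω)
  -- integrability of products
  have hW₁Z : Integrable (fun ω => W₁ ω * Z ω) P :=
    int_bdd_mul hZint hW₁m.aestronglyMeasurable (ae_of_all _ hW₁)
  have hW₂Z : Integrable (fun ω => W₂ ω * Z ω) P :=
    int_bdd_mul hZint hW₂m.aestronglyMeasurable (ae_of_all _ hW₂)
  have hW₁F : ∀ n, Integrable (fun ω => W₁ ω * F n ω) P := fun n =>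
    int_bdd_mul (hFint n) hW₁m.aestronglyMeasurable (ae_of_all _ hW₁)
  have hW₂F : ∀ n, Integrable (fun ω => W₂ ω * F n ω) P := fun n =>
    int_bdd_mul (hFint n) hW₂m.aestronglyMeasurable (ae_of_all _ hW₂)
  set D : Ω → ℝ := fun ω =>
    (P[fun ω => W₁ ω * Z ω|m]) ω - c ω * (P[fun ω => W₂ ω * Z ω|m]) ω with hD
  have hcCE : Integrable (fun ω => c ω * (P[fun ω => W₂ ω * Z ω|m]) ω) P :=
    int_bdd_mul integrable_condExp hcm hc
  have hDint : Integrable D P := integrable_condExp.sub hcCE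
  have key : ∀ n : ℕ, ∫ ω, |D ω| ∂P ≤ 2 * ∫ ω, |Z ω - F n ω| ∂P := by
    intro n
    have Hn := hyp (f n) (hfm n) (hfb n)
    have h1 : P[fun ω => W₁ ω * Z ω|m] - P[fun ω => W₁ ω * F n ω|m]
        =ᵐ[P] P[fun ω => W₁ ω * Z ω - W₁ ω * F n ω|m] :=
      (condExp_sub hW₁Z (hW₁F n) m).symm
    have h2 : P[fun ω => W₂ ω * Z ω|m] - P[fun ω => W₂ ω * F n ω|m]
        =ᵐ[P] P[fun ω => W₂ ω * Z ω - W₂ ω * F n ω|m] :=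
      (condExp_sub hW₂Z (hW₂F n) m).symm
    have habs : ∀ᵐ ω ∂P, |D ω| ≤
        |(P[fun ω => W₁ ω * Z ω - W₁ ω * F n ω|m]) ω|
          + |(P[fun ω => W₂ ω * Z ω - W₂ ω * F n ω|m]) ω| := by
      filter_upwards [Hn, h1, h2, hc] with ω hn1 h1 h2 hcw
      simp only [Pi.sub_apply] at h1 h2
      have hDω : D ω = ((P[fun ω => W₁ ω * Z ω|m]) ω - (P[fun ω => W₁ ω * F n ω|m]) ω)
          + c ω * ((P[fun ω => W₂ ω * F n ω|m]) ω - (P[fun ω => W₂ ω * Z ω|m]) ω) := by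
        simp only [hD]
        linear_combination hn1
      calc |D ω| ≤ |(P[fun ω => W₁ ω * Z ω|m]) ω - (P[fun ω => W₁ ω * F n ω|m]) ω|
            + |c ω| * |(P[fun ω => W₂ ω * F n ω|m]) ω - (P[fun ω => W₂ ω * Z ω|m]) ω| := by
              rw [hDω]; exact (abs_add_le _ _).trans (by rw [abs_mul])
        _ ≤ |(P[fun ω => W₁ ω * Z ω - W₁ ω * F n ω|m]) ω|
            + |(P[fun ω => W₂ ω * Z ω - W₂ ω * F n ω|m]) ω| := by
              rw [h1, abs_sub_comm ((P[fun ω => W₂ ω * F n ω|m]) ω), h2]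
              have h0 := abs_nonneg ((P[fun ω => W₂ ω * Z ω - W₂ ω * F n ω|m]) ω)
              nlinarith [abs_nonneg (c ω)]
    have step1 : ∫ ω, |D ω| ∂P ≤
        ∫ ω, (|(P[fun ω => W₁ ω * Z ω - W₁ ω * F n ω|m]) ω|
          + |(P[fun ω => W₂ ω * Z ω - W₂ ω * F n ω|m]) ω|) ∂P :=
      integral_mono_ae hDint.abs (integrable_condExp.abs.add integrable_condExp.abs) habs
    have step2 : ∫ ω, (|(P[fun ω => W₁ ω * Z ω - W₁ ω * F n ω|m]) ω|
          + |(P[fun ω => W₂ ω * Z ω - W₂ ω * F n ω|m]) ω|) ∂P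
        = ∫ ω, |(P[fun ω => W₁ ω * Z ω - W₁ ω * F n ω|m]) ω| ∂P
          + ∫ ω, |(P[fun ω => W₂ ω * Z ω - W₂ ω * F n ω|m]) ω| ∂P :=
      integral_add integrable_condExp.abs integrable_condExp.abs
    have b1 : ∫ ω, |(P[fun ω => W₁ ω * Z ω - W₁ ω * F n ω|m]) ω| ∂P
        ≤ ∫ ω, |Z ω - F n ω| ∂P := by
      refine (integral_abs_condExp_le _).trans (integral_mono ((hW₁Z.sub (hW₁F n)).abs)
        ((hZint.sub (hFint n)).abs) fun ω => ?_)
      have : W₁ ω * Z ω - W₁ ω * F n ω = W₁ ω * (Z ω - F n ω) := by ring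
      rw [this, abs_mul]
      nlinarith [abs_nonneg (Z ω - F n ω), hW₁ ω, abs_nonneg (W₁ ω)]
    have b2 : ∫ ω, |(P[fun ω => W₂ ω * Z ω - W₂ ω * F n ω|m]) ω| ∂P
        ≤ ∫ ω, |Z ω - F n ω| ∂P := by
      refine (integral_abs_condExp_le _).trans (integral_mono ((hW₂Z.sub (hW₂F n)).abs)
        ((hZint.sub (hFint n)).abs) fun ω => ?_)
      have : W₂ ω * Z ω - W₂ ω * F n ω = W₂ ω * (Z ω - F n ω) := by ring
      rw [this, abs_mul]
      nlinarith [abs_nonneg (Z ω - F n ω), hW₂ ω, abs_nonneg (W₂ ω)]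
    linarith
  have hT : Tendsto (fun n => ∫ ω, |Z ω - F n ω| ∂P) atTop (nhds 0) := by
    have := tendsto_integral_of_dominated_convergence (μ := P)
      (F := fun n ω => |Z ω - F n ω|) (f := fun _ => (0:ℝ)) (fun ω => 2 * |Z ω|)
      (fun n => ((hZm.sub (hFm n)).abs).aestronglyMeasurable)
      (hZint.abs.const_mul 2)
      (fun n => ae_of_all _ fun ω => by
        show ‖|Z ω - F n ω|‖ ≤ 2 * |Z ω|
        rw [Real.norm_eq_abs, abs_abs]
        have h1 := hFle n ω
        have h2 : |Z ω - F n ω| ≤ |Z ω| + |F n ω| := abs_sub _ _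
        linarith)
      (ae_of_all _ fun ω => by
        have h := ((tendsto_const_nhds (x := Z ω) (f := atTop (α := ℕ))).sub
          (trunc_tendsto (Z ω))).abs
        rw [sub_self, abs_zero] at h
        exact h)
    simpa using this
  have h0 : ∫ ω, |D ω| ∂P ≤ 0 := by
    have hT2 : Tendsto (fun n : ℕ => 2 * ∫ ω, |Z ω - F n ω| ∂P) atTop (nhds 0) := by
      simpa using hT.const_mul 2
    exact ge_of_tendsto' hT2 key
  have hDz : ∫ ω, |D ω| ∂P = 0 :=
    le_antisymm h0 (integral_nonneg fun ω => abs_nonneg _)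
  have hD0 : (fun ω => |D ω|) =ᵐ[P] 0 :=
    (integral_eq_zero_iff_of_nonneg (fun ω => abs_nonneg _) hDint.abs).mp hDz
  filter_upwards [hD0] with ω h
  have : D ω = 0 := abs_eq_zero.mp h
  exact sub_eq_zero.mp this

lemma div_bound2 {ε p t : ℝ} (hε : 0 < ε) (hp1 : ε ≤ p) (hp2 : p ≤ 1 - ε) (ht : ε ≤ t) :
    |(1 - p) / p / t| ≤ ε⁻¹ * ε⁻¹ := by
  have hp0 : 0 < p := lt_of_lt_of_le hε hp1
  have ht0 : 0 < t := lt_of_lt_of_le hε ht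
  have hnum : (0:ℝ) ≤ 1 - p := by linarith
  rw [abs_of_nonneg (div_nonneg (div_nonneg hnum hp0.le) ht0.le)]
  have h1 : (1 - p) / p ≤ 1 / ε := div_le_div₀ (by norm_num) (by linarith) hε hp1
  have h2 : (1 - p) / p / t ≤ (1 / ε) / ε :=
    div_le_div₀ (by positivity) h1 hε ht
  calc (1 - p) / p / t ≤ (1 / ε) / ε := h2
    _ = ε⁻¹ * ε⁻¹ := by rw [one_div, div_eq_mul_inv]

theorem double_robustness_propensity_side
    {Ω : Type*} [MeasurableSpace Ω] (P : Measure Ω) [IsProbabilityMeasure P]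
    (X A G Y0 Y1 Y : Ω → ℝ)
    (hX : Measurable X) (hA : Measurable A) (hG : Measurable G)
    (hY0m : Measurable Y0) (hY1m : Measurable Y1)
    (hY0 : Integrable Y0 P) (hY1 : Integrable Y1 P)
    (hAbin : ∀ ω, A ω = 0 ∨ A ω = 1) (hGbin : ∀ ω, G ω = 0 ∨ G ω = 1)
    (hcons : ∀ ω, Y ω = A ω * Y1 ω + (1 - A ω) * Y0 ω)
    (e1 π μ0 μ1 : ℝ → ℝ)
    (he1m : Measurable e1) (hπm : Measurable π)
    (hμ0m : Measurable μ0) (hμ1m : Measurable μ1)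
    (hπ : (fun ω => π (X ω)) =ᵐ[P] P[G | mX X])
    (he1 : (fun ω => e1 (X ω) * π (X ω)) =ᵐ[P] P[fun ω => A ω * G ω | mX X])
    (hpose : ∀ᵐ ω ∂P, 0 < e1 (X ω) ∧ e1 (X ω) < 1)
    (hposπ : ∀ᵐ ω ∂P, 0 < π (X ω) ∧ π (X ω) < 1)
    (hunconf : ∀ f : ℝ × ℝ → ℝ, Measurable f → (∃ C, ∀ p, |f p| ≤ C) →
      P[fun ω => G ω * A ω * f (Y0 ω, Y1 ω) | mX X]
        =ᵐ[P] fun ω => e1 (X ω) * (P[fun ω => G ω * f (Y0 ω, Y1 ω) | mX X]) ω)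
    (htrans : ∀ f : ℝ × ℝ → ℝ, Measurable f → (∃ C, ∀ p, |f p| ≤ C) →
      P[fun ω => G ω * f (Y0 ω, Y1 ω) | mX X]
        =ᵐ[P] fun ω => π (X ω) * (P[fun ω => f (Y0 ω, Y1 ω) | mX X]) ω)
    (hμ1 : (fun ω => μ1 (X ω) * e1 (X ω) * π (X ω)) =ᵐ[P]
      P[fun ω => A ω * G ω * Y ω | mX X])
    (hμ0 : (fun ω => μ0 (X ω) * (1 - e1 (X ω)) * π (X ω)) =ᵐ[P]
      P[fun ω => (1 - A ω) * G ω * Y ω | mX X])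
    (q τ : ℝ)
    (hq : q = (P {ω | G ω = 1}).toReal) (hq0 : 0 < q) (hq1 : q < 1)
    (hτ : τ = (∫ ω, (1 - G ω) * (Y1 ω - Y0 ω) ∂P) / (1 - q))
    (et πt : ℝ → ℝ) (hetm : Measurable et) (hπtm : Measurable πt)
    (ε : ℝ) (hε : 0 < ε)
    (hband : ∀ᵐ ω ∂P, ε ≤ et (X ω) ∧ et (X ω) ≤ 1 - ε
      ∧ ε ≤ πt (X ω) ∧ πt (X ω) ≤ 1 - ε)
    (φ : Ω → ℝ)
    (hφ : ∀ ω, φ ω =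
      G ω / (1 - q) * ((1 - πt (X ω)) / πt (X ω)) *
        (A ω * (Y ω - μ1 (X ω)) / et (X ω)
          - (1 - A ω) * (Y ω - μ0 (X ω)) / (1 - et (X ω)))
      + (1 - G ω) / (1 - q) * (μ1 (X ω) - μ0 (X ω)))
    (hφint : Integrable φ P) :
    ∫ ω, φ ω ∂P = τ := by
  have hm : mX X ≤ ‹MeasurableSpace Ω› := hX.comap_le
  haveI : SigmaFinite (P.trim hm) := inferInstance
  have hXm : Measurable[mX X] X := Measurable.of_comap_le le_rfl
  have hcomp : ∀ h : ℝ → ℝ, Measurable h →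
      StronglyMeasurable[mX X] (fun ω => h (X ω)) := fun h hh =>
    (hh.comp hXm).stronglyMeasurable
  -- pointwise bounds
  have hGbd : ∀ ω, |G ω| ≤ 1 := fun ω => by rcases hGbin ω with h | h <;> simp [h]
  have hAbd : ∀ ω, |A ω| ≤ 1 := fun ω => by rcases hAbin ω with h | h <;> simp [h]
  have h1Abd : ∀ ω, |1 - A ω| ≤ 1 := fun ω => by rcases hAbin ω with h | h <;> simp [h]
  have h1Gbd : ∀ ω, |1 - G ω| ≤ 1 := fun ω => by rcases hGbin ω with h | h <;> simp [h]
  have hAGbd : ∀ ω, |A ω * G ω| ≤ 1 := fun ω => by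
    rcases hAbin ω with h | h <;> rcases hGbin ω with h' | h' <;> simp [h, h']
  have hGAbd : ∀ ω, |G ω * A ω| ≤ 1 := fun ω => by
    rcases hAbin ω with h | h <;> rcases hGbin ω with h' | h' <;> simp [h, h']
  have h1AGbd : ∀ ω, |(1 - A ω) * G ω| ≤ 1 := fun ω => by
    rcases hAbin ω with h | h <;> rcases hGbin ω with h' | h' <;> simp [h, h']
  have hπbd : ∀ᵐ ω ∂P, |π (X ω)| ≤ 1 := by
    filter_upwards [hposπ] with ω h; rw [abs_le]; constructor <;> linarith [h.1, h.2]
  have he1bd : ∀ᵐ ω ∂P, |e1 (X ω)| ≤ 1 := by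
    filter_upwards [hpose] with ω h; rw [abs_le]; constructor <;> linarith [h.1, h.2]
  -- Y measurable and integrable
  have hYeq : Y = fun ω => A ω * Y1 ω + (1 - A ω) * Y0 ω := funext hcons
  have hYm : Measurable Y := by
    rw [hYeq]; exact (hA.mul hY1m).add ((measurable_const.sub hA).mul hY0m)
  have hYint : Integrable Y P := by
    rw [hYeq]
    exact (int_bdd_mul hY1 hA.aestronglyMeasurable (ae_of_all _ hAbd)).add
      (int_bdd_mul hY0 (measurable_const.sub hA).aestronglyMeasurable (ae_of_all _ h1Abd))
  have hGint : Integrable G P :=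
    (integrable_const (1:ℝ)).mono' hG.aestronglyMeasurable
      (ae_of_all _ fun ω => by rw [Real.norm_eq_abs]; simpa using hGbd ω)
  have hAGint : Integrable (fun ω => A ω * G ω) P :=
    (integrable_const (1:ℝ)).mono' (hA.mul hG).aestronglyMeasurable
      (ae_of_all _ fun ω => by rw [Real.norm_eq_abs]; simpa using hAGbd ω)
  have hGY1int : Integrable (fun ω => G ω * Y1 ω) P :=
    int_bdd_mul hY1 hG.aestronglyMeasurable (ae_of_all _ hGbd)
  have hGY0int : Integrable (fun ω => G ω * Y0 ω) P :=
    int_bdd_mul hY0 hG.aestronglyMeasurable (ae_of_all _ hGbd)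
  -- conditional expectation identities for Y1, Y0 (extension to integrable functions)
  have E1 : P[fun ω => G ω * Y1 ω | mX X]
      =ᵐ[P] fun ω => π (X ω) * (P[Y1 | mX X]) ω := by
    have H := condexp_limit P Y0 Y1 G (fun _ => 1) (fun ω => π (X ω))
      hY0m hY1m hG measurable_const (hπm.comp hX).aestronglyMeasurable
      hGbd (fun ω => by norm_num) hπbd (fun p => p.2) measurable_snd hY1 (mX X) hm
      (fun f hf hb => by
        have H0 := htrans f hf hb
        simpa only [one_mul] using H0)
    simpa only [one_mul] using H
  have E0 : P[fun ω => G ω * Y0 ω | mX X]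
      =ᵐ[P] fun ω => π (X ω) * (P[Y0 | mX X]) ω := by
    have H := condexp_limit P Y0 Y1 G (fun _ => 1) (fun ω => π (X ω))
      hY0m hY1m hG measurable_const (hπm.comp hX).aestronglyMeasurable
      hGbd (fun ω => by norm_num) hπbd (fun p => p.1) measurable_fst hY0 (mX X) hm
      (fun f hf hb => by
        have H0 := htrans f hf hb
        simpa only [one_mul] using H0)
    simpa only [one_mul] using H
  have F1 : P[fun ω => G ω * A ω * Y1 ω | mX X]
      =ᵐ[P] fun ω => e1 (X ω) * (P[fun ω => G ω * Y1 ω | mX X]) ω := by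
    have H := condexp_limit P Y0 Y1 (fun ω => G ω * A ω) G (fun ω => e1 (X ω))
      hY0m hY1m (hG.mul hA) hG (he1m.comp hX).aestronglyMeasurable
      hGAbd hGbd he1bd (fun p => p.2) measurable_snd hY1 (mX X) hm
      (fun f hf hb => hunconf f hf hb)
    exact H
  have F0 : P[fun ω => G ω * A ω * Y0 ω | mX X]
      =ᵐ[P] fun ω => e1 (X ω) * (P[fun ω => G ω * Y0 ω | mX X]) ω := by
    have H := condexp_limit P Y0 Y1 (fun ω => G ω * A ω) G (fun ω => e1 (X ω))
      hY0m hY1m (hG.mul hA) hG (he1m.comp hX).aestronglyMeasurable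
      hGAbd hGbd he1bd (fun p => p.1) measurable_fst hY0 (mX X) hm
      (fun f hf hb => hunconf f hf hb)
    exact H
  -- identify μ1∘X and μ0∘X
  have hμ1' : (fun ω => μ1 (X ω)) =ᵐ[P] P[Y1 | mX X] := by
    have hfun : (fun ω => A ω * G ω * Y ω) = fun ω => G ω * A ω * Y1 ω :=
      funext fun ω => by rcases hAbin ω with h | h <;> (rw [hcons ω, h]; ring)
    have h := hμ1
    rw [hfun] at h
    filter_upwards [h, F1, E1, hpose, hposπ] with ω h hF hE hp hpp
    have hne : e1 (X ω) * π (X ω) ≠ 0 := mul_ne_zero (ne_of_gt hp.1) (ne_of_gt hpp.1)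
    refine mul_right_cancel₀ hne ?_
    linear_combination h + hF + e1 (X ω) * hE
  have hμ0' : (fun ω => μ0 (X ω)) =ᵐ[P] P[Y0 | mX X] := by
    have hGAY0int : Integrable (fun ω => G ω * A ω * Y0 ω) P :=
      int_bdd_mul hY0 (hG.mul hA).aestronglyMeasurable (ae_of_all _ hGAbd)
    have hfun : (fun ω => (1 - A ω) * G ω * Y ω)
        = fun ω => G ω * Y0 ω - G ω * A ω * Y0 ω :=
      funext fun ω => by rcases hAbin ω with h | h <;> (rw [hcons ω, h]; ring)
    have h := hμ0
    rw [hfun] at h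
    have hsub : P[fun ω => G ω * Y0 ω - G ω * A ω * Y0 ω | mX X]
        =ᵐ[P] fun ω => (P[fun ω => G ω * Y0 ω | mX X]) ω
          - (P[fun ω => G ω * A ω * Y0 ω | mX X]) ω :=
      condExp_sub (m := mX X) hGY0int hGAY0int
    filter_upwards [h, hsub, F0, E0, hpose, hposπ] with ω h hs hF hE hp hpp
    have hne : (1 - e1 (X ω)) * π (X ω) ≠ 0 :=
      mul_ne_zero (by linarith [hp.2]) (ne_of_gt hpp.1)
    refine mul_right_cancel₀ hne ?_
    linear_combination h + hs - hF + (1 - e1 (X ω)) * hE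
  have hμ1Xint : Integrable (fun ω => μ1 (X ω)) P := integrable_condExp.congr hμ1'.symm
  have hμ0Xint : Integrable (fun ω => μ0 (X ω)) P := integrable_condExp.congr hμ0'.symm
  -- the two correction terms have zero conditional expectation
  have hAGYint : Integrable (fun ω => A ω * G ω * Y ω) P :=
    int_bdd_mul hYint (hA.mul hG).aestronglyMeasurable (ae_of_all _ hAGbd)
  have h1AGYint : Integrable (fun ω => (1 - A ω) * G ω * Y ω) P :=
    int_bdd_mul hYint ((measurable_const.sub hA).mul hG).aestronglyMeasurable
      (ae_of_all _ h1AGbd)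
  have hμAGint : Integrable (fun ω => μ1 (X ω) * (A ω * G ω)) P := by
    have := int_bdd_mul hμ1Xint (hA.mul hG).aestronglyMeasurable (ae_of_all _ hAGbd)
    exact this.congr (ae_of_all _ fun ω => mul_comm _ _)
  have hGsubAGint : Integrable (fun ω => G ω - A ω * G ω) P := hGint.sub hAGint
  have hμ0Gint : Integrable (fun ω => μ0 (X ω) * (G ω - A ω * G ω)) P := by
    have hb : ∀ ω, |G ω - A ω * G ω| ≤ 1 := fun ω => by
      rcases hAbin ω with h | h <;> rcases hGbin ω with h' | h' <;> simp [h, h']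
    have := int_bdd_mul hμ0Xint (hG.sub (hA.mul hG)).aestronglyMeasurable (ae_of_all _ hb)
    exact this.congr (ae_of_all _ fun ω => mul_comm _ _)
  have hZA0 : P[fun ω => A ω * G ω * (Y ω - μ1 (X ω)) | mX X] =ᵐ[P] 0 := by
    have hfun : (fun ω => A ω * G ω * (Y ω - μ1 (X ω)))
        = fun ω => A ω * G ω * Y ω - μ1 (X ω) * (A ω * G ω) := funext fun ω => by ring
    rw [hfun]
    have hsub : P[fun ω => A ω * G ω * Y ω - μ1 (X ω) * (A ω * G ω) | mX X]
        =ᵐ[P] fun ω => (P[fun ω => A ω * G ω * Y ω | mX X]) ω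
          - (P[fun ω => μ1 (X ω) * (A ω * G ω) | mX X]) ω :=
      condExp_sub (m := mX X) hAGYint hμAGint
    have hpull : P[fun ω => μ1 (X ω) * (A ω * G ω) | mX X]
        =ᵐ[P] fun ω => μ1 (X ω) * (P[fun ω => A ω * G ω | mX X]) ω :=
      condExp_mul_of_stronglyMeasurable_left (hcomp μ1 hμ1m) hμAGint hAGint
    filter_upwards [hsub, hpull, hμ1, he1] with ω hs hp h1 he
    show _ = (0 : Ω → ℝ) ω
    simp only [Pi.zero_apply]
    linear_combination hs - hp + μ1 (X ω) * he - h1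
  have hZB0 : P[fun ω => (1 - A ω) * G ω * (Y ω - μ0 (X ω)) | mX X] =ᵐ[P] 0 := by
    have hfun : (fun ω => (1 - A ω) * G ω * (Y ω - μ0 (X ω)))
        = fun ω => (1 - A ω) * G ω * Y ω - μ0 (X ω) * (G ω - A ω * G ω) :=
      funext fun ω => by ring
    rw [hfun]
    have hsub : P[fun ω => (1 - A ω) * G ω * Y ω - μ0 (X ω) * (G ω - A ω * G ω) | mX X]
        =ᵐ[P] fun ω => (P[fun ω => (1 - A ω) * G ω * Y ω | mX X]) ω
          - (P[fun ω => μ0 (X ω) * (G ω - A ω * G ω) | mX X]) ω :=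
      condExp_sub (m := mX X) h1AGYint hμ0Gint
    have hpull : P[fun ω => μ0 (X ω) * (G ω - A ω * G ω) | mX X]
        =ᵐ[P] fun ω => μ0 (X ω) * (P[fun ω => G ω - A ω * G ω | mX X]) ω :=
      condExp_mul_of_stronglyMeasurable_left (hcomp μ0 hμ0m) hμ0Gint hGsubAGint
    have hsub2 : P[fun ω => G ω - A ω * G ω | mX X]
        =ᵐ[P] fun ω => (P[G | mX X]) ω - (P[fun ω => A ω * G ω | mX X]) ω :=
      condExp_sub (m := mX X) hGint hAGint
    filter_upwards [hsub, hpull, hμ0, hπ, he1, hsub2] with ω hs hp h0 hπω heω hs2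
    show _ = (0 : Ω → ℝ) ω
    simp only [Pi.zero_apply]
    linear_combination hs - hp - μ0 (X ω) * hs2 + μ0 (X ω) * hπω - μ0 (X ω) * heω - h0
  -- integrability of the weighted terms
  have hZAint : Integrable (fun ω => A ω * G ω * (Y ω - μ1 (X ω))) P :=
    int_bdd_mul (hYint.sub hμ1Xint) (hA.mul hG).aestronglyMeasurable (ae_of_all _ hAGbd)
  have hZBint : Integrable (fun ω => (1 - A ω) * G ω * (Y ω - μ0 (X ω))) P :=
    int_bdd_mul (hYint.sub hμ0Xint) ((measurable_const.sub hA).mul hG).aestronglyMeasurable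
      (ae_of_all _ h1AGbd)
  have hg1m : Measurable (fun x : ℝ => (1 - πt x) / πt x / et x) :=
    ((measurable_const.sub hπtm).div hπtm).div hetm
  have hg2m : Measurable (fun x : ℝ => (1 - πt x) / πt x / (1 - et x)) :=
    ((measurable_const.sub hπtm).div hπtm).div (measurable_const.sub hetm)
  have hg1b : ∀ᵐ ω ∂P, |(1 - πt (X ω)) / πt (X ω) / et (X ω)| ≤ ε⁻¹ * ε⁻¹ := by
    filter_upwards [hband] with ω h
    exact div_bound2 hε h.2.2.1 h.2.2.2 h.1
  have hg2b : ∀ᵐ ω ∂P, |(1 - πt (X ω)) / πt (X ω) / (1 - et (X ω))| ≤ ε⁻¹ * ε⁻¹ := by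
    filter_upwards [hband] with ω h
    exact div_bound2 hε h.2.2.1 h.2.2.2 (by linarith [h.2.1])
  have hg1ZAint : Integrable
      (fun ω => (1 - πt (X ω)) / πt (X ω) / et (X ω)
        * (A ω * G ω * (Y ω - μ1 (X ω)))) P :=
    int_bdd_mul hZAint (hg1m.comp hX).aestronglyMeasurable hg1b
  have hg2ZBint : Integrable
      (fun ω => (1 - πt (X ω)) / πt (X ω) / (1 - et (X ω))
        * ((1 - A ω) * G ω * (Y ω - μ0 (X ω)))) P :=
    int_bdd_mul hZBint (hg2m.comp hX).aestronglyMeasurable hg2b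
  -- the two correction integrals vanish
  have hint1 : ∫ ω, (1 - πt (X ω)) / πt (X ω) / et (X ω)
      * (A ω * G ω * (Y ω - μ1 (X ω))) ∂P = 0 := by
    have hpull : P[fun ω => (1 - πt (X ω)) / πt (X ω) / et (X ω)
          * (A ω * G ω * (Y ω - μ1 (X ω))) | mX X]
        =ᵐ[P] fun ω => (1 - πt (X ω)) / πt (X ω) / et (X ω)
          * (P[fun ω => A ω * G ω * (Y ω - μ1 (X ω)) | mX X]) ω :=
      condExp_mul_of_stronglyMeasurable_left
        (hcomp (fun x => (1 - πt x) / πt x / et x) hg1m) hg1ZAint hZAint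
    have hzero : P[fun ω => (1 - πt (X ω)) / πt (X ω) / et (X ω)
        * (A ω * G ω * (Y ω - μ1 (X ω))) | mX X] =ᵐ[P] 0 := by
      filter_upwards [hpull, hZA0] with ω h1 h2
      show _ = (0 : Ω → ℝ) ω
      simp only [Pi.zero_apply] at h2 ⊢
      rw [h1, h2, mul_zero]
    calc ∫ ω, (1 - πt (X ω)) / πt (X ω) / et (X ω)
          * (A ω * G ω * (Y ω - μ1 (X ω))) ∂P
        = ∫ ω, (P[fun ω => (1 - πt (X ω)) / πt (X ω) / et (X ω)
            * (A ω * G ω * (Y ω - μ1 (X ω))) | mX X]) ω ∂P := (integral_condExp hm).symm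
      _ = ∫ _ω, (0:ℝ) ∂P := integral_congr_ae (by filter_upwards [hzero] with ω h; simpa using h)
      _ = 0 := integral_zero _ _
  have hint2 : ∫ ω, (1 - πt (X ω)) / πt (X ω) / (1 - et (X ω))
      * ((1 - A ω) * G ω * (Y ω - μ0 (X ω))) ∂P = 0 := by
    have hpull : P[fun ω => (1 - πt (X ω)) / πt (X ω) / (1 - et (X ω))
          * ((1 - A ω) * G ω * (Y ω - μ0 (X ω))) | mX X]
        =ᵐ[P] fun ω => (1 - πt (X ω)) / πt (X ω) / (1 - et (X ω))
          * (P[fun ω => (1 - A ω) * G ω * (Y ω - μ0 (X ω)) | mX X]) ω :=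
      condExp_mul_of_stronglyMeasurable_left
        (hcomp (fun x => (1 - πt x) / πt x / (1 - et x)) hg2m) hg2ZBint hZBint
    have hzero : P[fun ω => (1 - πt (X ω)) / πt (X ω) / (1 - et (X ω))
        * ((1 - A ω) * G ω * (Y ω - μ0 (X ω))) | mX X] =ᵐ[P] 0 := by
      filter_upwards [hpull, hZB0] with ω h1 h2
      show _ = (0 : Ω → ℝ) ω
      simp only [Pi.zero_apply] at h2 ⊢
      rw [h1, h2, mul_zero]
    calc ∫ ω, (1 - πt (X ω)) / πt (X ω) / (1 - et (X ω))
          * ((1 - A ω) * G ω * (Y ω - μ0 (X ω))) ∂P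
        = ∫ ω, (P[fun ω => (1 - πt (X ω)) / πt (X ω) / (1 - et (X ω))
            * ((1 - A ω) * G ω * (Y ω - μ0 (X ω))) | mX X]) ω ∂P := (integral_condExp hm).symm
      _ = ∫ _ω, (0:ℝ) ∂P := integral_congr_ae (by filter_upwards [hzero] with ω h; simpa using h)
      _ = 0 := integral_zero _ _
  -- the remaining term equals the target integral
  have h1mGint : Integrable (fun ω => 1 - G ω) P := (integrable_const (1:ℝ)).sub hGint
  have hRint : Integrable (fun ω => (μ1 (X ω) - μ0 (X ω)) * (1 - G ω)) P := by
    have := int_bdd_mul (hμ1Xint.sub hμ0Xint)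
      (measurable_const.sub hG).aestronglyMeasurable (ae_of_all _ h1Gbd)
    exact this.congr (ae_of_all _ fun ω => mul_comm _ _)
  have hSint : Integrable (fun ω => (1 - G ω) * (Y1 ω - Y0 ω)) P :=
    int_bdd_mul (hY1.sub hY0) (measurable_const.sub hG).aestronglyMeasurable
      (ae_of_all _ h1Gbd)
  have hCE1mG : P[fun ω => 1 - G ω | mX X] =ᵐ[P] fun ω => 1 - π (X ω) := by
    have h : P[fun ω => 1 - G ω | mX X]
        =ᵐ[P] fun ω => (P[fun _ : Ω => (1:ℝ) | mX X]) ω - (P[G | mX X]) ω :=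
      condExp_sub (m := mX X) (integrable_const (1:ℝ)) hGint
    have hc := condExp_const hm (1:ℝ) (μ := P)
    filter_upwards [h, hπ] with ω h hπω
    rw [h, hc, ← hπω]
  have hCER : P[fun ω => (μ1 (X ω) - μ0 (X ω)) * (1 - G ω) | mX X]
      =ᵐ[P] fun ω => (μ1 (X ω) - μ0 (X ω)) * (1 - π (X ω)) := by
    have hpull : P[fun ω => (μ1 (X ω) - μ0 (X ω)) * (1 - G ω) | mX X]
        =ᵐ[P] fun ω => (μ1 (X ω) - μ0 (X ω)) * (P[fun ω => 1 - G ω | mX X]) ω :=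
      condExp_mul_of_stronglyMeasurable_left
        (hcomp (fun x => μ1 x - μ0 x) (hμ1m.sub hμ0m)) hRint h1mGint
    filter_upwards [hpull, hCE1mG] with ω h1 h2
    rw [h1, h2]
  have hCES : P[fun ω => (1 - G ω) * (Y1 ω - Y0 ω) | mX X]
      =ᵐ[P] fun ω => (μ1 (X ω) - μ0 (X ω)) * (1 - π (X ω)) := by
    have hfun : (fun ω => (1 - G ω) * (Y1 ω - Y0 ω))
        = fun ω => (Y1 ω - Y0 ω) - (G ω * Y1 ω - G ω * Y0 ω) := funext fun ω => by ring
    rw [hfun]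
    have hsub : P[fun ω => (Y1 ω - Y0 ω) - (G ω * Y1 ω - G ω * Y0 ω) | mX X]
        =ᵐ[P] fun ω => (P[fun ω => Y1 ω - Y0 ω | mX X]) ω
          - (P[fun ω => G ω * Y1 ω - G ω * Y0 ω | mX X]) ω :=
      condExp_sub (m := mX X) (hY1.sub hY0) (hGY1int.sub hGY0int)
    have hsubY : P[fun ω => Y1 ω - Y0 ω | mX X]
        =ᵐ[P] fun ω => (P[Y1 | mX X]) ω - (P[Y0 | mX X]) ω :=
      condExp_sub (m := mX X) hY1 hY0
    have hsubG : P[fun ω => G ω * Y1 ω - G ω * Y0 ω | mX X]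
        =ᵐ[P] fun ω => (P[fun ω => G ω * Y1 ω | mX X]) ω
          - (P[fun ω => G ω * Y0 ω | mX X]) ω :=
      condExp_sub (m := mX X) hGY1int hGY0int
    filter_upwards [hsub, hsubY, hsubG, E1, E0, hμ1', hμ0'] with ω hs hY hGs hE1 hE0 h1 h0
    show _ = (μ1 (X ω) - μ0 (X ω)) * (1 - π (X ω))
    linear_combination hs + hY - hGs - hE1 + hE0 - (1 - π (X ω)) * (h1 - h0)
  have hint3 : ∫ ω, (μ1 (X ω) - μ0 (X ω)) * (1 - G ω) ∂P
      = ∫ ω, (1 - G ω) * (Y1 ω - Y0 ω) ∂P := by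
    calc ∫ ω, (μ1 (X ω) - μ0 (X ω)) * (1 - G ω) ∂P
        = ∫ ω, (P[fun ω => (μ1 (X ω) - μ0 (X ω)) * (1 - G ω) | mX X]) ω ∂P :=
          (integral_condExp hm).symm
      _ = ∫ ω, (P[fun ω => (1 - G ω) * (Y1 ω - Y0 ω) | mX X]) ω ∂P :=
          integral_congr_ae (hCER.trans hCES.symm)
      _ = ∫ ω, (1 - G ω) * (Y1 ω - Y0 ω) ∂P := integral_condExp hm
  -- final assembly
  have hφeq : ∫ ω, φ ω ∂P = ∫ ω,
      ((1 - q)⁻¹ * ((1 - πt (X ω)) / πt (X ω) / et (X ω)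
          * (A ω * G ω * (Y ω - μ1 (X ω))))
        - (1 - q)⁻¹ * ((1 - πt (X ω)) / πt (X ω) / (1 - et (X ω))
          * ((1 - A ω) * G ω * (Y ω - μ0 (X ω)))))
      + (1 - q)⁻¹ * ((μ1 (X ω) - μ0 (X ω)) * (1 - G ω)) ∂P :=
    integral_congr_ae (ae_of_all _ fun ω => by rw [hφ ω]; ring)
  have I1 : Integrable (fun ω => (1 - q)⁻¹ * ((1 - πt (X ω)) / πt (X ω) / et (X ω)
      * (A ω * G ω * (Y ω - μ1 (X ω))))) P := hg1ZAint.const_mul _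
  have I2 : Integrable (fun ω => (1 - q)⁻¹ * ((1 - πt (X ω)) / πt (X ω) / (1 - et (X ω))
      * ((1 - A ω) * G ω * (Y ω - μ0 (X ω))))) P := hg2ZBint.const_mul _
  have I12 : Integrable (fun ω => (1 - q)⁻¹ * ((1 - πt (X ω)) / πt (X ω) / et (X ω)
      * (A ω * G ω * (Y ω - μ1 (X ω))))
      - (1 - q)⁻¹ * ((1 - πt (X ω)) / πt (X ω) / (1 - et (X ω))
      * ((1 - A ω) * G ω * (Y ω - μ0 (X ω))))) P := I1.sub I2
  have I3 : Integrable (fun ω => (1 - q)⁻¹ * ((μ1 (X ω) - μ0 (X ω)) * (1 - G ω))) P :=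
    hRint.const_mul _
  rw [hφeq, integral_add I12 I3, integral_sub I1 I2,
    integral_const_mul, integral_const_mul, integral_const_mul, hint1, hint2, hint3, hτ]
  ring
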